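/- On the polynomial algebra C[x¹, x²] with Poisson bracket determined by {x¹, x²} = x², the Poisson homology in degree 0, i.e. the quotient of C[x¹,x²] by the span of all Poisson brackets {f, g}, is isomorphic to C[x¹] as a vector space. -/

import Mathlib

open MvPolynomial

noncomputable def hp0ev : MvPolynomial (Fin 2) ℂ →ₐ[ℂ] Polynomial ℂ :=
  aeval ![Polynomial.X, 0]

noncomputable def hp0emb : Polynomial ℂ →ₐ[ℂ] MvPolynomial (Fin 2) ℂ :=
  Polynomial.aeval (X 0)

lemma hp0ev_emb (q : Polynomial ℂ) : hp0ev (hp0emb q) = q := by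
  have : hp0ev.comp hp0emb = AlgHom.id ℂ (Polynomial ℂ) := by
    apply Polynomial.algHom_ext
    simp [hp0ev, hp0emb]
  simpa using congrArg (fun φ => φ q) this

lemma hp0_bracket_mem (a d : ℕ) :
    (X 0 : MvPolynomial (Fin 2) ℂ) ^ a * X 1 ^ (d + 1) ∈
      Submodule.span ℂ
        {z : MvPolynomial (Fin 2) ℂ | ∃ f g : MvPolynomial (Fin 2) ℂ,
          z = X 1 * (pderiv 0 f * pderiv 1 g - pderiv 1 f * pderiv 0 g)} := by
  set z : MvPolynomial (Fin 2) ℂ :=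
    X 1 * (pderiv 0 (X 0 ^ (a + 1) * X 1 ^ d) * pderiv 1 (X 1)
      - pderiv 1 (X 0 ^ (a + 1) * X 1 ^ d) * pderiv 0 (X 1)) with hz
  have hzmem : z ∈ Submodule.span ℂ
      {z : MvPolynomial (Fin 2) ℂ | ∃ f g : MvPolynomial (Fin 2) ℂ,
        z = X 1 * (pderiv 0 f * pderiv 1 g - pderiv 1 f * pderiv 0 g)} :=
    Submodule.subset_span ⟨_, _, hz⟩
  have hzval : z = ((a : ℂ) + 1) • (X 0 ^ a * X 1 ^ (d + 1)) := by
    have h0 : pderiv (0 : Fin 2) (X 0 ^ (a + 1) * X 1 ^ d : MvPolynomial (Fin 2) ℂ)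
        = ((a : ℂ) + 1) • (X 0 ^ a * X 1 ^ d) := by
      simp [pderiv_mul, Derivation.leibniz_pow, smul_smul, mul_comm, mul_assoc,
        mul_left_comm, Algebra.smul_def, algebraMap_eq]
      try ring
    rw [hz, h0]
    simp [Algebra.smul_def, algebraMap_eq]
    ring
  have hne : ((a : ℂ) + 1) ≠ 0 := by
    exact_mod_cast (Nat.cast_add_one_ne_zero a : ((a : ℂ) + 1) ≠ 0)
  have : (X 0 : MvPolynomial (Fin 2) ℂ) ^ a * X 1 ^ (d + 1)
      = ((a : ℂ) + 1)⁻¹ • z := by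
    rw [hzval, smul_smul, inv_mul_cancel₀ hne, one_smul]
  rw [this]
  exact Submodule.smul_mem _ _ hzmem

lemma hp0_sub_mem (p : MvPolynomial (Fin 2) ℂ) :
    p - hp0emb (hp0ev p) ∈
      Submodule.span ℂ
        {z : MvPolynomial (Fin 2) ℂ | ∃ f g : MvPolynomial (Fin 2) ℂ,
          z = X 1 * (pderiv 0 f * pderiv 1 g - pderiv 1 f * pderiv 0 g)} := by
  induction p using MvPolynomial.induction_on' with
  | monomial u c =>
    have hm : (monomial u c : MvPolynomial (Fin 2) ℂ)
        = C c * X 0 ^ (u 0) * X 1 ^ (u 1) := by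
      rw [monomial_eq]
      rw [Finsupp.prod_fintype _ _ (by simp)]
      rw [Fin.prod_univ_two, mul_assoc]
    rcases Nat.eq_zero_or_pos (u 1) with h1 | h1
    · have : hp0emb (hp0ev (monomial u c)) = monomial u c := by
        rw [hm, h1]
        simp [hp0ev, hp0emb, map_pow]
      rw [this, sub_self]
      exact Submodule.zero_mem _
    · obtain ⟨d, hd⟩ := Nat.exists_eq_add_of_lt h1
      rw [hd] at hm; rw [zero_add] at hm
      have hev : hp0ev (monomial u c) = 0 := by
        rw [hm]; simp [hp0ev, map_pow]
      rw [hev, map_zero, sub_zero, hm, mul_assoc, C_mul']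
      exact Submodule.smul_mem _ c (hp0_bracket_mem (u 0) d)
  | add p q hp hq =>
    have : p + q - hp0emb (hp0ev (p + q))
        = (p - hp0emb (hp0ev p)) + (q - hp0emb (hp0ev q)) := by
      rw [map_add, map_add]; ring
    rw [this]
    exact Submodule.add_mem _ hp hq

lemma hp0_span_le_ker :
    Submodule.span ℂ
        {z : MvPolynomial (Fin 2) ℂ | ∃ f g : MvPolynomial (Fin 2) ℂ,
          z = X 1 * (pderiv 0 f * pderiv 1 g - pderiv 1 f * pderiv 0 g)}
      ≤ LinearMap.ker hp0ev.toLinearMap := by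
  rw [Submodule.span_le]
  rintro z ⟨f, g, rfl⟩
  simp [hp0ev]

/-- On `ℂ[x¹, x²]` with Poisson bracket `{f, g} = x² (∂₁f ∂₂g − ∂₂f ∂₁g)` (the unique
biderivation with `{x¹, x²} = x²`), the composite `ℂ[x¹] ↪ ℂ[x¹,x²] → HP₀` onto the
zeroth Poisson homology `HP₀ = A / span{brackets}` is a bijection. -/
theorem hp0_of_log_symplectic_surface :
    Function.Bijective (fun q : Polynomial ℂ =>
      (Submodule.Quotient.mk
        (Polynomial.aeval (X 0 : MvPolynomial (Fin 2) ℂ) q) :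
        MvPolynomial (Fin 2) ℂ ⧸ Submodule.span ℂ
          {z : MvPolynomial (Fin 2) ℂ | ∃ f g : MvPolynomial (Fin 2) ℂ,
            z = X 1 * (pderiv 0 f * pderiv 1 g - pderiv 1 f * pderiv 0 g)})) := by
  constructor
  · intro q q' h
    rw [Submodule.Quotient.eq] at h
    have := hp0_span_le_ker h
    rw [LinearMap.mem_ker] at this
    have h2 : hp0ev (hp0emb q) - hp0ev (hp0emb q') = 0 := by
      rw [← map_sub]; exact this
    rw [hp0ev_emb, hp0ev_emb, sub_eq_zero] at h2
    exact h2
  · intro P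
    obtain ⟨p, rfl⟩ := Submodule.Quotient.mk_surjective _ P
    refine ⟨hp0ev p, ?_⟩
    simp only
    rw [Submodule.Quotient.eq]
    have := hp0_sub_mem p
    have hneg : hp0emb (hp0ev p) - p = -(p - hp0emb (hp0ev p)) := by ring
    show (hp0emb (hp0ev p)) - p ∈ _
    rw [hneg]
    exact Submodule.neg_mem _ this
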